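/- Let H be a complex Hilbert space and L(H) the C*-algebra of bounded linear operators on H. Let (Bₙ)_{n≥1} be a sequence in L(H) such that ∑_{n=1}^∞ ‖Bₙ‖² converges with sum β < 1/2, and let Q ∈ L(H) be a positive operator. Then the unique solution X ∈ L(H) of the operator equation X − ∑_{n=1}^∞ Bₙ* X Bₙ = Q is a positive (in particular, self-adjoint/Hermitian) operator. -/

import Mathlib

open ContinuousLinearMap Filter Function

/-- The positive cone of `L(H)` is closed. -/
lemma isClosed_setOf_isPositive {H : Type*} [NormedAddCommGroup H]
    [InnerProductSpace ℂ H] [CompleteSpace H] :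
    IsClosed {T : H →L[ℂ] H | T.IsPositive} := by
  have : {T : H →L[ℂ] H | T.IsPositive} =
      {T : H →L[ℂ] H | star T = T} ∩
        ⋂ x : H, {T : H →L[ℂ] H | 0 ≤ RCLike.re (inner ℂ (T x) x : ℂ)} := by
    ext T
    simp only [Set.mem_setOf_eq, Set.mem_inter_iff, Set.mem_iInter]
    constructor
    · intro hT
      exact ⟨hT.isSelfAdjoint, fun x => hT.2 x⟩
    · intro ⟨h1, h2⟩
      exact isPositive_def'.mpr ⟨h1, fun x => h2 x⟩
  rw [this]
  refine IsClosed.inter (isClosed_eq continuous_star continuous_id) (isClosed_iInter fun x => ?_)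
  refine isClosed_le continuous_const ?_
  exact RCLike.continuous_re.comp <|
    Continuous.inner ((ContinuousLinearMap.apply ℂ H x).continuous) continuous_const

theorem operator_equation_solution_isPositive
    {H : Type*} [NormedAddCommGroup H] [InnerProductSpace ℂ H] [CompleteSpace H]
    (B : ℕ → H →L[ℂ] H)
    (hsum : Summable fun n => ‖B n‖ ^ 2)
    (hβ : (∑' n, ‖B n‖ ^ 2) < 1 / 2)
    (Q : H →L[ℂ] H) (hQ : Q.IsPositive) :
    (∃! X : H →L[ℂ] H, X - ∑' n, star (B n) * X * B n = Q) ∧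
    ∀ X : H →L[ℂ] H, X - ∑' n, star (B n) * X * B n = Q → X.IsPositive := by
  set β : ℝ := ∑' n, ‖B n‖ ^ 2 with hβdef
  have hβ0 : 0 ≤ β := tsum_nonneg fun n => sq_nonneg _
  -- termwise norm bound
  have hterm : ∀ (X : H →L[ℂ] H) (n : ℕ),
      ‖star (B n) * X * B n‖ ≤ ‖B n‖ ^ 2 * ‖X‖ := by
    intro X n
    calc ‖star (B n) * X * B n‖ ≤ ‖star (B n) * X‖ * ‖B n‖ := norm_mul_le _ _
      _ ≤ ‖star (B n)‖ * ‖X‖ * ‖B n‖ := by gcongr; exact norm_mul_le _ _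
      _ = ‖B n‖ ^ 2 * ‖X‖ := by rw [norm_star]; ring
  -- summability of the norms and of the series
  have hSn : ∀ X : H →L[ℂ] H, Summable fun n => ‖star (B n) * X * B n‖ := fun X =>
    Summable.of_nonneg_of_le (fun n => norm_nonneg _) (hterm X) (hsum.mul_right ‖X‖)
  have hS : ∀ X : H →L[ℂ] H, Summable fun n => star (B n) * X * B n := fun X =>
    Summable.of_norm (hSn X)
  -- the contraction map
  set f : (H →L[ℂ] H) → (H →L[ℂ] H) :=
    fun X => (∑' n, star (B n) * X * B n) + Q with hfdef
  have hbound : ∀ X : H →L[ℂ] H, ‖∑' n, star (B n) * X * B n‖ ≤ β * ‖X‖ := by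
    intro X
    calc ‖∑' n, star (B n) * X * B n‖ ≤ ∑' n, ‖star (B n) * X * B n‖ :=
          norm_tsum_le_tsum_norm (hSn X)
      _ ≤ ∑' n, ‖B n‖ ^ 2 * ‖X‖ := Summable.tsum_le_tsum (hterm X) (hSn X) (hsum.mul_right ‖X‖)
      _ = β * ‖X‖ := by rw [tsum_mul_right]
  have hdiff : ∀ X Y : H →L[ℂ] H,
      f X - f Y = ∑' n, star (B n) * (X - Y) * B n := by
    intro X Y
    have : (fun n => star (B n) * (X - Y) * B n)
        = fun n => star (B n) * X * B n - star (B n) * Y * B n := by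
      funext n; rw [mul_sub, sub_mul]
    rw [hfdef]
    simp only [add_sub_add_right_eq_sub]
    rw [this]
    exact (Summable.tsum_sub (hS X) (hS Y)).symm
  set K : NNReal := β.toNNReal with hKdef
  have hKβ : (K : ℝ) = β := Real.coe_toNNReal β hβ0
  have hlip : LipschitzWith K f := by
    apply LipschitzWith.of_dist_le_mul
    intro X Y
    rw [dist_eq_norm, dist_eq_norm, hdiff, hKβ]
    exact hbound (X - Y)
  have hK1 : (K : ℝ) < 1 := by rw [hKβ]; linarith
  have hC : ContractingWith K f := ⟨by exact_mod_cast hK1, hlip⟩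
  -- equation ↔ fixed point
  have hiff : ∀ X : H →L[ℂ] H,
      (X - ∑' n, star (B n) * X * B n = Q) ↔ IsFixedPt f X := by
    intro X
    rw [sub_eq_iff_eq_add]
    have hfX : f X = (∑' n, star (B n) * X * B n) + Q := rfl
    constructor
    · intro h
      exact hfX.trans (h.trans (add_comm Q _)).symm
    · intro h
      exact ((hfX.symm.trans h).symm).trans (add_comm _ Q)
  -- f preserves positivity
  have hfpos : ∀ X : H →L[ℂ] H, X.IsPositive → (f X).IsPositive := by
    intro X hX
    have hterm_pos : ∀ n, (star (B n) * X * B n).IsPositive := by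
      intro n
      have := hX.adjoint_conj (B n)
      rw [ContinuousLinearMap.star_eq_adjoint, mul_assoc]
      exact this
    have hpartial : ∀ N : ℕ,
        (∑ n ∈ Finset.range N, star (B n) * X * B n).IsPositive := by
      intro N
      induction N with
      | zero => simpa using isPositive_zero
      | succ N ih =>
        rw [Finset.sum_range_succ]
        exact ih.add (hterm_pos N)
    have htend := (hS X).hasSum.tendsto_sum_nat
    have htsum_pos : (∑' n, star (B n) * X * B n).IsPositive :=
      isClosed_setOf_isPositive.mem_of_tendsto htend
        (Filter.Eventually.of_forall fun N => hpartial N)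
    exact htsum_pos.add hQ
  -- iterates of f starting at Q are positive
  have hiter : ∀ n : ℕ, (f^[n] Q).IsPositive := by
    intro n
    induction n with
    | zero => simpa using hQ
    | succ n ih =>
      rw [Function.iterate_succ_apply']
      exact hfpos _ ih
  have hfp_pos : (ContractingWith.fixedPoint f hC).IsPositive := by
    have htend := hC.tendsto_iterate_fixedPoint Q
    exact isClosed_setOf_isPositive.mem_of_tendsto htend
      (Filter.Eventually.of_forall fun n => hiter n)
  constructor
  · refine ⟨ContractingWith.fixedPoint f hC, ?_, ?_⟩
    · exact (hiff _).mpr (hC.fixedPoint_isFixedPt)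
    · intro Y hY
      exact hC.fixedPoint_unique ((hiff Y).mp hY)
  · intro X hX
    have : X = ContractingWith.fixedPoint f hC := hC.fixedPoint_unique ((hiff X).mp hX)
    rw [this]
    exact hfp_pos
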